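/- Let K be the Baumslag–Solitar group BS(1,−1) = ⟨a, b | b a b⁻¹ = a⁻¹⟩, let H be a group and let ρ : K → H be a group homomorphism. Then ρ is not injective if and only if there exists a positive integer p such that either ρ(a)^p = 1 or ρ(b)^{2p} = 1. -/

import Mathlib

/-- The single relator `b a b⁻¹ a` of `BS(1,−1)`, over the free group on two generators
(`false` playing the role of `a`, `true` that of `b`). -/
def bsRels : Set (FreeGroup Bool) :=
  {FreeGroup.of true * FreeGroup.of false * (FreeGroup.of true)⁻¹ * FreeGroup.of false}

/-- The Baumslag–Solitar group `BS(1,−1) = ⟨a, b | b a b⁻¹ = a⁻¹⟩`. -/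
abbrev BS1m1 : Type := PresentedGroup bsRels

/-- The generator `a` of `BS(1,−1)`. -/
def bsA : BS1m1 := PresentedGroup.of false

/-- The generator `b` of `BS(1,−1)`. -/
def bsB : BS1m1 := PresentedGroup.of true

/-- sign function -/
def bsE (n : ℤ) : ℤ := if Even n then 1 else -1

lemma bsE_even {n : ℤ} (h : Even n) : bsE n = 1 := if_pos h
lemma bsE_odd {n : ℤ} (h : Odd n) : bsE n = -1 := if_neg (Int.not_even_iff_odd.mpr h)
lemma bsE_neg (n : ℤ) : bsE (-n) = bsE n := by simp [bsE, even_neg]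
lemma bsE_succ (n : ℤ) : bsE (n + 1) = -bsE n := by
  rcases Int.even_or_odd n with h | h
  · rw [bsE_even h, bsE_odd h.add_one]
  · rw [bsE_odd h, bsE_even (by simpa using h.add_one)]; norm_num
lemma bsE_pred (n : ℤ) : bsE (n - 1) = -bsE n := by
  have := bsE_succ (n - 1); rw [sub_add_cancel] at this; omega

lemma bs_rel : bsB * bsA * bsB⁻¹ * bsA = 1 := by
  have h : PresentedGroup.mk bsRels
      (FreeGroup.of true * FreeGroup.of false * (FreeGroup.of true)⁻¹ * FreeGroup.of false) = 1 :=
    (QuotientGroup.eq_one_iff _).mpr (Subgroup.subset_normalClosure rfl)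
  simpa [bsA, bsB, PresentedGroup.of, map_mul, map_inv] using h

lemma bs_conj : bsB * bsA * bsB⁻¹ = bsA⁻¹ := eq_inv_of_mul_eq_one_left bs_rel

lemma bs_conj_zpow (m : ℤ) : bsB * bsA ^ m * bsB⁻¹ = bsA ^ (-m) := by
  rw [← conj_zpow, bs_conj, inv_zpow, zpow_neg]

lemma bs_conj_zpow' (m : ℤ) : bsB⁻¹ * bsA ^ m * bsB = bsA ^ (-m) := by
  have h := bs_conj_zpow (-m)
  rw [neg_neg] at h
  calc bsB⁻¹ * bsA ^ m * bsB = bsB⁻¹ * (bsB * bsA ^ (-m) * bsB⁻¹) * bsB := by rw [h]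
    _ = bsA ^ (-m) := by group

lemma bs_comm (n m : ℤ) : bsB ^ n * bsA ^ m = bsA ^ (bsE n * m) * bsB ^ n := by
  induction n using Int.induction_on with
  | zero => simp [bsE_even Even.zero]
  | succ k ih =>
      calc bsB ^ ((k : ℤ) + 1) * bsA ^ m = bsB * (bsB ^ (k : ℤ) * bsA ^ m) := by
            rw [zpow_add, zpow_one]; group
        _ = bsB * (bsA ^ (bsE k * m) * bsB ^ (k : ℤ)) := by rw [ih]
        _ = (bsB * bsA ^ (bsE k * m) * bsB⁻¹) * bsB ^ ((k : ℤ) + 1) := by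
            rw [zpow_add, zpow_one]; group
        _ = bsA ^ (-(bsE k * m)) * bsB ^ ((k : ℤ) + 1) := by rw [bs_conj_zpow]
        _ = bsA ^ (bsE ((k : ℤ) + 1) * m) * bsB ^ ((k : ℤ) + 1) := by rw [bsE_succ, neg_mul]
  | pred k ih =>
      calc bsB ^ (-(k : ℤ) - 1) * bsA ^ m = bsB⁻¹ * (bsB ^ (-(k : ℤ)) * bsA ^ m) := by
            rw [sub_eq_add_neg, zpow_add, zpow_neg_one]; group
        _ = bsB⁻¹ * (bsA ^ (bsE (-k) * m) * bsB ^ (-(k : ℤ))) := by rw [ih]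
        _ = (bsB⁻¹ * bsA ^ (bsE (-k) * m) * bsB) * bsB ^ (-(k : ℤ) - 1) := by
            rw [sub_eq_add_neg, zpow_add, zpow_neg_one]; group
        _ = bsA ^ (-(bsE (-(k : ℤ)) * m)) * bsB ^ (-(k : ℤ) - 1) := by rw [bs_conj_zpow']
        _ = bsA ^ (bsE (-(k : ℤ) - 1) * m) * bsB ^ (-(k : ℤ) - 1) := by rw [bsE_pred, neg_mul]

lemma bs_normal_form (g : BS1m1) : ∃ m n : ℤ, g = bsA ^ m * bsB ^ n := by
  let S : Subgroup BS1m1 :=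
    { carrier := {g | ∃ m n : ℤ, g = bsA ^ m * bsB ^ n}
      one_mem' := ⟨0, 0, by simp⟩
      mul_mem' := by
        rintro x y ⟨m, n, rfl⟩ ⟨k, l, rfl⟩
        refine ⟨m + bsE n * k, n + l, ?_⟩
        calc bsA ^ m * bsB ^ n * (bsA ^ k * bsB ^ l)
            = bsA ^ m * (bsB ^ n * bsA ^ k) * bsB ^ l := by group
          _ = bsA ^ m * (bsA ^ (bsE n * k) * bsB ^ n) * bsB ^ l := by rw [bs_comm]
          _ = bsA ^ (m + bsE n * k) * bsB ^ (n + l) := by rw [zpow_add, zpow_add]; group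
      inv_mem' := by
        rintro x ⟨m, n, rfl⟩
        refine ⟨bsE n * (-m), -n, ?_⟩
        calc (bsA ^ m * bsB ^ n)⁻¹ = bsB ^ (-n) * bsA ^ (-m) := by
              rw [zpow_neg, zpow_neg]; group
          _ = bsA ^ (bsE (-n) * (-m)) * bsB ^ (-n) := by rw [bs_comm]
          _ = bsA ^ (bsE n * (-m)) * bsB ^ (-n) := by rw [bsE_neg] }
  have : g ∈ S := PresentedGroup.generated_by bsRels S (by
    intro j
    cases j
    · exact ⟨1, 0, by simp [bsA]⟩
    · exact ⟨0, 1, by simp [bsB]⟩) g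
  exact this

/-- Map to the infinite dihedral group: `a ↦ r 1`, `b ↦ sr 0`. -/
lemma bsF1_rel : ∀ w ∈ bsRels, FreeGroup.lift
    (fun x => if x then (DihedralGroup.sr 0 : DihedralGroup 0) else DihedralGroup.r 1) w = 1 := by
  intro w hw
  rw [Set.mem_singleton_iff.mp hw]
  have hinv : (DihedralGroup.sr (0 : ZMod 0))⁻¹ = DihedralGroup.sr 0 := rfl
  simp only [map_mul, map_inv, FreeGroup.lift_apply_of, if_true, if_false, hinv,
    DihedralGroup.sr_mul_r, DihedralGroup.r_mul_sr, DihedralGroup.sr_mul_sr,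
    DihedralGroup.one_def]
  norm_num

noncomputable def bsF1 : BS1m1 →* DihedralGroup 0 := PresentedGroup.toGroup bsF1_rel

lemma bsF1_A : bsF1 bsA = DihedralGroup.r 1 := by
  simp [bsF1, bsA, PresentedGroup.toGroup.of]

/-- Map to `Multiplicative ℤ`: `a ↦ 1`, `b ↦ ofAdd 1`. -/
lemma bsF2_rel : ∀ w ∈ bsRels, FreeGroup.lift
    (fun x => if x then Multiplicative.ofAdd (1 : ℤ) else 1) w = 1 := by
  intro w hw
  rw [Set.mem_singleton_iff.mp hw]
  simp [map_mul, map_inv, FreeGroup.lift_apply_of]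

noncomputable def bsF2 : BS1m1 →* Multiplicative ℤ := PresentedGroup.toGroup bsF2_rel

lemma bsF2_B : bsF2 bsB = Multiplicative.ofAdd (1 : ℤ) := by
  simp [bsF2, bsB, PresentedGroup.toGroup.of]

lemma bsA_pow_ne_one {p : ℕ} (hp : 0 < p) : bsA ^ p ≠ 1 := by
  intro h
  have h1 : (DihedralGroup.r 1 : DihedralGroup 0) ^ p = 1 := by
    have := congrArg bsF1 h
    rwa [map_pow, bsF1_A, map_one] at this
  rw [DihedralGroup.r_one_pow, DihedralGroup.one_def, DihedralGroup.r.injEq] at h1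
  exact hp.ne' (by exact_mod_cast h1)

lemma bsB_pow_ne_one {p : ℕ} (hp : 0 < p) : bsB ^ p ≠ 1 := by
  intro h
  have h1 : (Multiplicative.ofAdd (1 : ℤ)) ^ p = 1 := by
    have := congrArg bsF2 h
    rwa [map_pow, map_one, bsF2_B] at this
  have h2 : (p : ℤ) = 0 := by simpa using congrArg Multiplicative.toAdd h1
  omega

lemma bs_key_even {m n : ℤ} (he : Even n) :
    bsB * (bsA ^ m * bsB ^ n) * bsB⁻¹ * (bsA ^ m * bsB ^ n) = bsB ^ (2 * n) := by
  have h1 : bsB * bsB ^ n * bsB⁻¹ = bsB ^ n := by group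
  calc bsB * (bsA ^ m * bsB ^ n) * bsB⁻¹ * (bsA ^ m * bsB ^ n)
      = (bsB * bsA ^ m * bsB⁻¹) * (bsB * bsB ^ n * bsB⁻¹) * (bsA ^ m * bsB ^ n) := by group
    _ = bsA ^ (-m) * bsB ^ n * (bsA ^ m * bsB ^ n) := by rw [bs_conj_zpow, h1]
    _ = bsA ^ (-m) * (bsB ^ n * bsA ^ m) * bsB ^ n := by group
    _ = bsA ^ (-m) * (bsA ^ (bsE n * m) * bsB ^ n) * bsB ^ n := by rw [bs_comm]
    _ = bsA ^ (-m) * (bsA ^ m * bsB ^ n) * bsB ^ n := by rw [bsE_even he, one_mul]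
    _ = bsB ^ (2 * n) := by rw [two_mul, zpow_add]; group

lemma bs_key_odd {m n : ℤ} (ho : Odd n) :
    bsA * (bsA ^ m * bsB ^ n) * bsA⁻¹ * (bsA ^ m * bsB ^ n)⁻¹ = bsA ^ (2 : ℤ) := by
  calc bsA * (bsA ^ m * bsB ^ n) * bsA⁻¹ * (bsA ^ m * bsB ^ n)⁻¹
      = bsA ^ (1 + m) * (bsB ^ n * bsA ^ (-1 : ℤ)) * bsB ^ (-n) * bsA ^ (-m) := by
        rw [zpow_add, zpow_one, zpow_neg, zpow_neg, zpow_neg, zpow_one]; group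
    _ = bsA ^ (1 + m) * (bsA ^ (bsE n * (-1)) * bsB ^ n) * bsB ^ (-n) * bsA ^ (-m) := by
        rw [bs_comm]
    _ = bsA ^ (1 + m) * (bsA ^ (1 : ℤ) * bsB ^ n) * bsB ^ (-n) * bsA ^ (-m) := by
        rw [bsE_odd ho]; norm_num
    _ = bsA ^ (1 + m) * bsA ^ (1 : ℤ) * bsA ^ (-m) := by group
    _ = bsA ^ (2 : ℤ) := by group

/-- A homomorphism `ρ` from `BS(1,−1)` to a group `H` is non-injective iff there is a positive
integer `p` with `ρ(a)^p = 1` or `ρ(b)^{2p} = 1`. -/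
theorem stmt18 {H : Type*} [Group H] (ρ : BS1m1 →* H) :
    ¬ Function.Injective ρ ↔
      ∃ p : ℕ, 0 < p ∧ (ρ bsA ^ p = 1 ∨ ρ bsB ^ (2 * p) = 1) := by
  constructor
  · intro hni
    obtain ⟨x, y, hxy, hne⟩ := Function.not_injective_iff.mp hni
    have hg1 : ρ (x * y⁻¹) = 1 := by rw [map_mul, map_inv, hxy, mul_inv_cancel]
    have hgne : x * y⁻¹ ≠ 1 := fun h => hne (by rw [← mul_inv_cancel y] at h; exact mul_right_cancel h)
    obtain ⟨m, n, hmn⟩ := bs_normal_form (x * y⁻¹)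
    rw [hmn] at hg1 hgne
    by_cases hn : n = 0
    · subst hn
      simp only [zpow_zero, mul_one] at hg1 hgne
      have hm : m ≠ 0 := fun h => hgne (by rw [h, zpow_zero])
      refine ⟨m.natAbs, Int.natAbs_pos.mpr hm, Or.inl ?_⟩
      have hz : ρ bsA ^ m = 1 := by rw [← map_zpow, hg1]
      have : ρ bsA ^ (m.natAbs : ℤ) = 1 := by
        rcases Int.natAbs_eq m with h | h
        · rw [← h]; exact hz
        · rw [h] at hz; rw [← inv_inv (ρ bsA ^ (m.natAbs : ℤ)), ← zpow_neg, hz, inv_one]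
      rwa [zpow_natCast] at this
    · rcases Int.even_or_odd n with he | ho
      · refine ⟨n.natAbs, Int.natAbs_pos.mpr hn, Or.inr ?_⟩
        have hz : ρ bsB ^ (2 * n) = 1 := by
          rw [← map_zpow, ← bs_key_even (m := m) he]
          simp [map_mul, map_inv, hg1]
        have h2 : ρ bsB ^ ((2 * n.natAbs : ℕ) : ℤ) = 1 := by
          rcases Int.natAbs_eq n with h | h
          · rw [show ((2 * n.natAbs : ℕ) : ℤ) = 2 * n by omega]; exact hz
          · rw [← inv_inv (ρ bsB ^ _), ← zpow_neg,
              show -((2 * n.natAbs : ℕ) : ℤ) = 2 * n by omega, hz, inv_one]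
        rwa [zpow_natCast] at h2
      · refine ⟨2, two_pos, Or.inl ?_⟩
        have hz : ρ bsA ^ (2 : ℤ) = 1 := by
          rw [← map_zpow, ← bs_key_odd (m := m) ho, map_mul, map_mul, map_mul, map_inv,
            map_inv, hg1]
          simp
        have h2 : ρ bsA ^ ((2 : ℕ) : ℤ) = 1 := by exact_mod_cast hz
        rwa [zpow_natCast] at h2
  · rintro ⟨p, hp, hcase⟩ hinj
    rcases hcase with h | h
    · have : bsA ^ p = 1 := hinj (by rw [map_pow, map_one, h])
      exact bsA_pow_ne_one hp this
    · have : bsB ^ (2 * p) = 1 := hinj (by rw [map_pow, map_one, h])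
      exact bsB_pow_ne_one (by omega) this
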